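/- Let f be a continuous 2π-periodic real-valued function with modulus of continuity ω, let β ≥ 0, and let A = (a_{n,k}) be a lower triangular infinite matrix of real numbers satisfying: (i) a_{n,k} ≥ 0 and Σ_{k=0}^{n} a_{n,k} = 1 for every n; (ii) there is a constant C, independent of n and m, such that Σ_{k=0}^{m-1} (k+1)^β |a_{n,k}/(k+1)^β − a_{n,k+1}/(k+2)^β| ≤ C·a_{n,m} for all 0 ≤ m ≤ n. Suppose H : (0,π] → [0,∞) is such that ∫_u^π t^{-2} ω(t) dt = O(H(u)) as u → 0+. Then ‖T_{n,A}(f) − f‖_∞ = O(ω(π/(n+1)) + a_{n,n}·H(π/(n+1))), with the implied constant independent of n. -/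

import Mathlib

open Real MeasureTheory

/-- The `k`-th partial sum of the (trigonometric) Fourier series of `f` at `x`. -/
noncomputable def fourierPartialSum (f : ℝ → ℝ) (k : ℕ) (x : ℝ) : ℝ :=
  (1 / (2 * Real.pi)) * (∫ t in (-Real.pi)..Real.pi, f t) +
    ∑ j ∈ Finset.Icc 1 k,
      ((1 / Real.pi) * (∫ t in (-Real.pi)..Real.pi, f t * Real.cos (j * t)) * Real.cos (j * x) +
        (1 / Real.pi) * (∫ t in (-Real.pi)..Real.pi, f t * Real.sin (j * t)) * Real.sin (j * x))

/-- The `A`-transform `T_{n,A}(f;x) = ∑_{k=0}^n a_{n,k} S_k(f;x)`. -/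
noncomputable def matrixTransform (a : ℕ → ℕ → ℝ) (f : ℝ → ℝ) (n : ℕ) (x : ℝ) : ℝ :=
  ∑ k ∈ Finset.range (n + 1), a n k * fourierPartialSum f k x

/-- The modulus of continuity `ω(δ,f)`. -/
noncomputable def modulusOfContinuity (f : ℝ → ℝ) (δ : ℝ) : ℝ :=
  sSup {y : ℝ | ∃ x t : ℝ, |t| ≤ δ ∧ y = |f (x + t) - f x|}


-- Auxiliary development --

lemma two_sin_mul_sin (a b : ℝ) : 2 * Real.sin a * Real.sin b = Real.cos (a - b) - Real.cos (a + b) := by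
  rw [Real.cos_sub, Real.cos_add]; ring

lemma two_sin_mul_cos (a b : ℝ) : 2 * Real.sin a * Real.cos b = Real.sin (b + a) - Real.sin (b - a) := by
  rw [Real.sin_add, Real.sin_sub]; ring

/-- The Dirichlet kernel. -/
noncomputable def dirK (k : ℕ) (t : ℝ) : ℝ := 1/2 + ∑ j ∈ Finset.Icc 1 k, Real.cos (j * t)

lemma dirK_continuous (k : ℕ) : Continuous (dirK k) := by
  unfold dirK
  exact continuous_const.add (continuous_finset_sum _ fun j _ =>
    Real.continuous_cos.comp (continuous_const.mul continuous_id))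

lemma dirK_even (k : ℕ) (t : ℝ) : dirK k (-t) = dirK k t := by
  unfold dirK
  congr 1
  refine Finset.sum_congr rfl fun j _ => ?_
  rw [mul_neg, Real.cos_neg]

lemma dirK_periodic (k : ℕ) : Function.Periodic (dirK k) (2 * Real.pi) := by
  intro t
  unfold dirK
  congr 1
  refine Finset.sum_congr rfl fun j _ => ?_
  rw [mul_add, Real.cos_add_nat_mul_two_pi]

lemma dirK_abs_le (k : ℕ) (t : ℝ) : |dirK k t| ≤ (k : ℝ) + 1 := by
  unfold dirK
  calc |1/2 + ∑ j ∈ Finset.Icc 1 k, Real.cos (j * t)|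
      ≤ |(1:ℝ)/2| + |∑ j ∈ Finset.Icc 1 k, Real.cos (j * t)| := abs_add_le _ _
    _ ≤ 1/2 + ∑ j ∈ Finset.Icc 1 k, |Real.cos (j * t)| := by
        rw [abs_of_pos (by norm_num : (0:ℝ) < 1/2)]
        exact add_le_add le_rfl (Finset.abs_sum_le_sum_abs _ _)
    _ ≤ 1/2 + ∑ j ∈ Finset.Icc 1 k, 1 := by
        exact add_le_add le_rfl (Finset.sum_le_sum fun j _ => Real.abs_cos_le_one _)
    _ ≤ (k : ℝ) + 1 := by
        rw [Finset.sum_const, Nat.card_Icc, nsmul_eq_mul, mul_one]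
        have : ((k + 1 - 1 : ℕ) : ℝ) ≤ (k : ℝ) := by simp
        linarith

lemma two_sin_dirK (k : ℕ) (t : ℝ) :
    2 * Real.sin (t/2) * dirK k t = Real.sin (((k:ℝ) + 1/2) * t) := by
  induction k with
  | zero =>
    unfold dirK
    simp only [Finset.Icc_self, Nat.cast_zero]
    rw [show ((0:ℝ) + 1/2) * t = t/2 by ring]
    simp
    ring
  | succ k ih =>
    unfold dirK at ih ⊢
    rw [Finset.sum_Icc_succ_top (by omega : 1 ≤ k + 1)]
    push_cast
    have expand : 2 * Real.sin (t/2) * (1/2 + (∑ j ∈ Finset.Icc 1 k, Real.cos (j * t) + Real.cos (((k:ℝ)+1) * t)))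
        = 2 * Real.sin (t/2) * (1/2 + ∑ j ∈ Finset.Icc 1 k, Real.cos (j * t))
          + 2 * Real.sin (t/2) * Real.cos (((k:ℝ)+1) * t) := by ring
    rw [expand, ih, two_sin_mul_cos (t/2) (((k:ℝ)+1) * t)]
    rw [show ((k:ℝ)+1) * t + t/2 = ((k:ℝ) + 1 + 1/2) * t by ring,
        show ((k:ℝ)+1) * t - t/2 = ((k:ℝ) + 1/2) * t by ring]
    ring

lemma sin_halfint_sum (m : ℕ) (t : ℝ) :
    2 * Real.sin (t/2) * (∑ j ∈ Finset.range (m+1), Real.sin (((j:ℝ) + 1/2) * t))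
      = 1 - Real.cos (((m:ℝ) + 1) * t) := by
  induction m with
  | zero =>
    rw [Finset.sum_range_one]
    push_cast
    have h := two_sin_mul_sin ((0 + 1/2) * t) (t/2)
    rw [show ((0:ℝ) + 1/2) * t - t/2 = 0 by ring, show ((0:ℝ) + 1/2) * t + t/2 = (0 + 1) * t by ring,
      Real.cos_zero] at h
    linarith
  | succ m ih =>
    rw [Finset.sum_range_succ, mul_add, ih]
    push_cast
    have h := two_sin_mul_sin (((m:ℝ) + 1 + 1/2) * t) (t/2)
    rw [show ((m:ℝ) + 1 + 1/2) * t - t/2 = ((m:ℝ) + 1) * t by ring,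
        show ((m:ℝ) + 1 + 1/2) * t + t/2 = ((m:ℝ) + 1 + 1) * t by ring] at h
    linarith

lemma integral_dirK (k : ℕ) : ∫ t in (0:ℝ)..Real.pi, dirK k t = Real.pi / 2 := by
  unfold dirK
  rw [intervalIntegral.integral_add (intervalIntegrable_const) (by
      apply Continuous.intervalIntegrable
      exact continuous_finset_sum _ fun j _ => Real.continuous_cos.comp (continuous_const.mul continuous_id))]
  rw [intervalIntegral.integral_finset_sum (fun j _ => by
      apply Continuous.intervalIntegrable
      exact Real.continuous_cos.comp (continuous_const.mul continuous_id))]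
  have h1 : ∫ t in (0:ℝ)..Real.pi, (1:ℝ)/2 = Real.pi / 2 := by
    simp [Real.pi_pos.le]
    ring
  have h2 : ∀ j ∈ Finset.Icc 1 k, (∫ t in (0:ℝ)..Real.pi, Real.cos ((j:ℝ) * t)) = 0 := by
    intro j hj
    have hj1 : 1 ≤ j := (Finset.mem_Icc.mp hj).1
    have hjne : (j : ℝ) ≠ 0 := Nat.cast_ne_zero.mpr (by omega)
    rw [intervalIntegral.integral_comp_mul_left (fun t => Real.cos t) hjne]
    simp [Real.sin_nat_mul_pi]
  rw [Finset.sum_congr rfl h2]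
  simp [h1]
  ring

lemma S_eq (f : ℝ → ℝ) (hf : Continuous f) (hper : Function.Periodic f (2 * Real.pi)) (k : ℕ) (x : ℝ) :
    fourierPartialSum f k x = (1/Real.pi) * ∫ t in (-Real.pi)..Real.pi, f (x + t) * dirK k t := by
  have hcos : ∀ j : ℕ, Continuous fun t : ℝ => Real.cos ((j:ℝ) * t) := fun j =>
    Real.continuous_cos.comp (continuous_const.mul continuous_id)
  have hsin : ∀ j : ℕ, Continuous fun t : ℝ => Real.sin ((j:ℝ) * t) := fun j =>
    Real.continuous_sin.comp (continuous_const.mul continuous_id)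
  -- step 1: shift
  have hshift : (∫ t in (-Real.pi)..Real.pi, f (x + t) * dirK k t)
      = ∫ t in (-Real.pi)..Real.pi, f t * dirK k (t - x) := by
    have hg : Function.Periodic (fun t => f (x + t) * dirK k t) (2 * Real.pi) := by
      intro t
      simp only [← add_assoc]
      rw [hper (x + t), dirK_periodic k t]
    have comp : (∫ t in (-Real.pi)..Real.pi, f t * dirK k (t - x))
        = ∫ t in (-Real.pi)..Real.pi, (fun s => f (x + s) * dirK k s) (t - x) := by
      congr 1
      ext t
      simp only []
      rw [show x + (t - x) = t by ring]
    rw [comp, intervalIntegral.integral_comp_sub_right (fun s => f (x + s) * dirK k s) x]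
    have := hg.intervalIntegral_add_eq (-Real.pi - x) (-Real.pi)
    rw [show -Real.pi - x + 2 * Real.pi = Real.pi - x by ring,
        show -Real.pi + 2 * Real.pi = Real.pi by ring] at this
    rw [this]
  rw [hshift]
  -- step 2: expand dirK
  have expand : ∀ t : ℝ, f t * dirK k (t - x)
      = f t * (1/2) + ∑ j ∈ Finset.Icc 1 k,
          ((f t * Real.cos ((j:ℝ) * t)) * Real.cos ((j:ℝ) * x) + (f t * Real.sin ((j:ℝ) * t)) * Real.sin ((j:ℝ) * x)) := by
    intro t
    unfold dirK
    rw [mul_add, Finset.mul_sum]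
    congr 1
    refine Finset.sum_congr rfl fun j _ => ?_
    rw [show (j:ℝ) * (t - x) = (j:ℝ) * t - (j:ℝ) * x by ring, Real.cos_sub]
    ring
  rw [intervalIntegral.integral_congr (g := fun t => f t * (1/2) + ∑ j ∈ Finset.Icc 1 k,
        ((f t * Real.cos ((j:ℝ) * t)) * Real.cos ((j:ℝ) * x) + (f t * Real.sin ((j:ℝ) * t)) * Real.sin ((j:ℝ) * x)))
      (fun t _ => expand t)]
  rw [intervalIntegral.integral_add ((show Continuous fun t => f t * (1/2) from hf.mul continuous_const).intervalIntegrable _ _)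
      (by
        apply Continuous.intervalIntegrable
        apply continuous_finset_sum
        intro j _
        exact ((hf.mul (hcos j)).mul continuous_const).add ((hf.mul (hsin j)).mul continuous_const))]
  rw [intervalIntegral.integral_finset_sum (fun (j : ℕ) _ =>
      (show Continuous fun t => (f t * Real.cos ((j:ℝ) * t)) * Real.cos ((j:ℝ) * x) + (f t * Real.sin ((j:ℝ) * t)) * Real.sin ((j:ℝ) * x) from (((hf.mul (hcos j)).mul continuous_const).add ((hf.mul (hsin j)).mul continuous_const))).intervalIntegrable _ _)]
  have per_j : ∀ j ∈ Finset.Icc 1 k,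
      (∫ t in (-Real.pi)..Real.pi,
        ((f t * Real.cos ((j:ℝ) * t)) * Real.cos ((j:ℝ) * x) + (f t * Real.sin ((j:ℝ) * t)) * Real.sin ((j:ℝ) * x)))
      = (∫ t in (-Real.pi)..Real.pi, f t * Real.cos ((j:ℝ) * t)) * Real.cos ((j:ℝ) * x)
        + (∫ t in (-Real.pi)..Real.pi, f t * Real.sin ((j:ℝ) * t)) * Real.sin ((j:ℝ) * x) := by
    intro j _
    rw [intervalIntegral.integral_add ((show Continuous fun t => (f t * Real.cos ((j:ℝ) * t)) * Real.cos ((j:ℝ) * x) from (hf.mul (hcos j)).mul continuous_const).intervalIntegrable _ _)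
        ((show Continuous fun t => (f t * Real.sin ((j:ℝ) * t)) * Real.sin ((j:ℝ) * x) from (hf.mul (hsin j)).mul continuous_const).intervalIntegrable _ _),
      intervalIntegral.integral_mul_const, intervalIntegral.integral_mul_const]
  rw [Finset.sum_congr rfl per_j]
  rw [intervalIntegral.integral_mul_const]
  unfold fourierPartialSum
  rw [mul_add, Finset.mul_sum]
  congr 1
  · ring
  · refine Finset.sum_congr rfl fun j _ => ?_
    ring

lemma S_sub (f : ℝ → ℝ) (hf : Continuous f) (hper : Function.Periodic f (2 * Real.pi)) (k : ℕ) (x : ℝ) :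
    fourierPartialSum f k x - f x
      = (1/Real.pi) * ∫ t in (0:ℝ)..Real.pi, (f (x + t) + f (x - t) - 2 * f x) * dirK k t := by
  have hint : ∀ g : ℝ → ℝ, Continuous g → ∀ a b : ℝ, IntervalIntegrable g volume a b :=
    fun g hg a b => hg.intervalIntegrable a b
  have hc1 : Continuous fun t => f (x + t) * dirK k t :=
    (hf.comp (continuous_const.add continuous_id)).mul (dirK_continuous k)
  have hc2 : Continuous fun t => f (x - t) * dirK k t :=
    (hf.comp (continuous_const.sub continuous_id)).mul (dirK_continuous k)
  rw [S_eq f hf hper k x]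
  -- split [-π,π] into [-π,0] ∪ [0,π]
  have hsplit : (∫ t in (-Real.pi)..Real.pi, f (x + t) * dirK k t)
      = (∫ t in (-Real.pi)..(0:ℝ), f (x + t) * dirK k t) + ∫ t in (0:ℝ)..Real.pi, f (x + t) * dirK k t :=
    (intervalIntegral.integral_add_adjacent_intervals (hint _ hc1 _ _) (hint _ hc1 _ _)).symm
  have hneg : (∫ t in (-Real.pi)..(0:ℝ), f (x + t) * dirK k t)
      = ∫ t in (0:ℝ)..Real.pi, f (x - t) * dirK k t := by
    have : (∫ t in (0:ℝ)..Real.pi, f (x - t) * dirK k t)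
        = ∫ t in (0:ℝ)..Real.pi, (fun s => f (x + s) * dirK k s) (-t) := by
      refine intervalIntegral.integral_congr fun t _ => ?_
      simp only []
      rw [dirK_even, show x + -t = x - t by ring]
    rw [this, intervalIntegral.integral_comp_neg (fun s => f (x + s) * dirK k s)]
    norm_num
  have hfx : f x = (1/Real.pi) * ∫ t in (0:ℝ)..Real.pi, (2 * f x) * dirK k t := by
    rw [intervalIntegral.integral_const_mul, integral_dirK]
    field_simp [Real.pi_ne_zero]
  rw [hsplit, hneg]
  rw [show (∫ t in (0:ℝ)..Real.pi, f (x - t) * dirK k t) + (∫ t in (0:ℝ)..Real.pi, f (x + t) * dirK k t)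
      = ∫ t in (0:ℝ)..Real.pi, (f (x + t) + f (x - t)) * dirK k t by
    rw [← intervalIntegral.integral_add (hint _ hc2 _ _) (hint _ hc1 _ _)]
    refine intervalIntegral.integral_congr fun t _ => ?_
    ring]
  nth_rewrite 1 [hfx]
  rw [← mul_sub]
  congr 1
  have hc3 : Continuous fun t => (f (x + t) + f (x - t)) * dirK k t :=
    ((hf.comp (continuous_const.add continuous_id)).add (hf.comp (continuous_const.sub continuous_id))).mul
      (dirK_continuous k)
  rw [← intervalIntegral.integral_sub (hint _ hc3 _ _)
    (hint (fun t => 2 * f x * dirK k t) (continuous_const.mul (dirK_continuous k)) _ _)]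
  refine intervalIntegral.integral_congr fun t _ => ?_
  ring

section moc
variable {f : ℝ → ℝ}

lemma f_bounded (hf : Continuous f) (hper : Function.Periodic f (2 * Real.pi)) : ∃ B : ℝ, 0 ≤ B ∧ ∀ y : ℝ, |f y| ≤ B := by
  obtain ⟨B, hB⟩ := (isCompact_Icc (a := (0:ℝ)) (b := 2 * Real.pi)).exists_bound_of_continuousOn
    hf.continuousOn
  refine ⟨max B 0, le_max_right _ _, fun y => ?_⟩
  obtain ⟨z, hz, hzy⟩ := hper.exists_mem_Ico₀ Real.two_pi_pos y
  rw [hzy]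
  exact le_trans (hB z ⟨hz.1, hz.2.le⟩) (le_max_left _ _)

lemma moc_bddAbove (hf : Continuous f) (hper : Function.Periodic f (2 * Real.pi)) (δ : ℝ) : BddAbove {y : ℝ | ∃ x t : ℝ, |t| ≤ δ ∧ y = |f (x + t) - f x|} := by
  obtain ⟨B, hB0, hB⟩ := f_bounded hf hper
  refine ⟨2 * B, fun y hy => ?_⟩
  obtain ⟨x, t, _, rfl⟩ := hy
  calc |f (x + t) - f x| ≤ |f (x + t)| + |f x| := abs_sub _ _
    _ ≤ B + B := add_le_add (hB _) (hB _)
    _ = 2 * B := by ring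

lemma moc_nonneg (hf : Continuous f) (hper : Function.Periodic f (2 * Real.pi)) {δ : ℝ} (hδ : 0 ≤ δ) : 0 ≤ modulusOfContinuity f δ := by
  apply le_csSup (moc_bddAbove hf hper δ)
  exact ⟨0, 0, by simpa using hδ, by simp⟩

lemma moc_spec (hf : Continuous f) (hper : Function.Periodic f (2 * Real.pi)) {δ : ℝ} (x t : ℝ) (ht : |t| ≤ δ) : |f (x + t) - f x| ≤ modulusOfContinuity f δ :=
  le_csSup (moc_bddAbove hf hper δ) ⟨x, t, ht, rfl⟩

lemma moc_mono (hf : Continuous f) (hper : Function.Periodic f (2 * Real.pi)) : Monotone (modulusOfContinuity f) := by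
  intro δ₁ δ₂ h
  by_cases h1 : 0 ≤ δ₁
  · apply csSup_le_csSup (moc_bddAbove hf hper δ₂)
    · exact ⟨0, 0, 0, by simpa using h1, by simp⟩
    · rintro y ⟨x, t, ht, rfl⟩
      exact ⟨x, t, ht.trans h, rfl⟩
  · push_neg at h1
    have : {y : ℝ | ∃ x t : ℝ, |t| ≤ δ₁ ∧ y = |f (x + t) - f x|} = ∅ := by
      ext y
      simp only [Set.mem_setOf_eq, Set.mem_empty_iff_false, iff_false]
      rintro ⟨x, t, ht, _⟩
      exact absurd (le_trans (abs_nonneg t) ht) (not_le.mpr h1)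
    unfold modulusOfContinuity
    rw [this, Real.sSup_empty]
    by_cases h2 : 0 ≤ δ₂
    · exact moc_nonneg hf hper h2
    · push_neg at h2
      have : {y : ℝ | ∃ x t : ℝ, |t| ≤ δ₂ ∧ y = |f (x + t) - f x|} = ∅ := by
        ext y
        simp only [Set.mem_setOf_eq, Set.mem_empty_iff_false, iff_false]
        rintro ⟨x, t, ht, _⟩
        exact absurd (le_trans (abs_nonneg t) ht) (not_le.mpr h2)
      rw [this, Real.sSup_empty]

lemma moc_measurable (hf : Continuous f) (hper : Function.Periodic f (2 * Real.pi)) : Measurable (modulusOfContinuity f) := (moc_mono hf hper).measurable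

end moc

lemma kernel_bound (β C : ℝ) (hβ : 0 ≤ β) (hC : 0 ≤ C) (a : ℕ → ℕ → ℝ)
    (hnn : ∀ n k : ℕ, 0 ≤ a n k) (n : ℕ)
    (hAn : ∑ k ∈ Finset.range n,
        ((k : ℝ) + 1) ^ β * |a n k / ((k : ℝ) + 1) ^ β - a n (k + 1) / ((k : ℝ) + 2) ^ β|
        ≤ C * a n n)
    (t : ℝ) (h1 : 0 < t) (h2 : t ≤ Real.pi) :
    |∑ k ∈ Finset.range (n+1), a n k * dirK k t| ≤ (1 + C) * a n n * Real.pi^2 / t^2 := by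
  set w : ℕ → ℝ := fun k => ((k : ℝ) + 1) ^ β with hw
  have hw_pos : ∀ k, 0 < w k := fun k => Real.rpow_pos_of_pos (by positivity) β
  have hw_mono : ∀ k, w k ≤ w (k+1) := by
    intro k
    apply Real.rpow_le_rpow (by positivity) _ hβ
    push_cast
    linarith
  have hst : 0 < Real.sin (t/2) := by
    apply Real.sin_pos_of_pos_of_lt_pi (by linarith)
    have := Real.pi_pos
    linarith
  set M : ℝ := 1 / Real.sin (t/2) with hM
  have hM_pos : 0 < M := by positivity
  -- partial sums of sin((l+1/2)t)
  set P : ℕ → ℝ := fun m => ∑ l ∈ Finset.range m, Real.sin (((l:ℝ) + 1/2) * t) with hP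
  have hP_bound : ∀ m, 0 ≤ P m ∧ P m ≤ M := by
    intro m
    cases m with
    | zero => simp [hP, hM_pos.le]
    | succ j =>
      have h := sin_halfint_sum j t
      have hc1 : Real.cos (((j:ℝ) + 1) * t) ≤ 1 := Real.cos_le_one _
      have hc2 : -1 ≤ Real.cos (((j:ℝ) + 1) * t) := Real.neg_one_le_cos _
      constructor
      · nlinarith [hst]
      · rw [hM, le_div_iff₀ hst]
        nlinarith
  -- weighted partial sums
  set G : ℕ → ℝ := fun m => ∑ l ∈ Finset.range m, w l * Real.sin (((l:ℝ) + 1/2) * t) with hG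
  have hG_bound : ∀ m : ℕ, |G (m+1)| ≤ 2 * w m * M := by
    intro m
    have habel := Finset.sum_range_by_parts (M := ℝ) w (fun l => Real.sin (((l:ℝ) + 1/2) * t)) (m+1)
    simp only [smul_eq_mul, Nat.add_sub_cancel] at habel
    have hGg : G (m+1) = w m * P (m+1) - ∑ i ∈ Finset.range m, (w (i+1) - w i) * P (i+1) := habel
    have tele : ∑ i ∈ Finset.range m, (w (i+1) - w i) = w m - w 0 := Finset.sum_range_sub w m
    have hterm : |∑ i ∈ Finset.range m, (w (i+1) - w i) * P (i+1)| ≤ (w m - w 0) * M := by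
      calc |∑ i ∈ Finset.range m, (w (i+1) - w i) * P (i+1)|
          ≤ ∑ i ∈ Finset.range m, |(w (i+1) - w i) * P (i+1)| := Finset.abs_sum_le_sum_abs _ _
        _ ≤ ∑ i ∈ Finset.range m, (w (i+1) - w i) * M := by
            refine Finset.sum_le_sum fun i _ => ?_
            rw [abs_mul, abs_of_nonneg (by linarith [hw_mono i])]
            have := hP_bound (i+1)
            exact mul_le_mul_of_nonneg_left (by rw [abs_of_nonneg this.1]; exact this.2)
              (by linarith [hw_mono i])
        _ = (w m - w 0) * M := by rw [← Finset.sum_mul, tele]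
    rw [hGg]
    have h1' : |w m * P (m+1)| ≤ w m * M := by
      rw [abs_mul, abs_of_nonneg (hw_pos m).le]
      have := hP_bound (m+1)
      exact mul_le_mul_of_nonneg_left (by rw [abs_of_nonneg this.1]; exact this.2) (hw_pos m).le
    calc |w m * P (m+1) - ∑ i ∈ Finset.range m, (w (i+1) - w i) * P (i+1)|
        ≤ |w m * P (m+1)| + |∑ i ∈ Finset.range m, (w (i+1) - w i) * P (i+1)| := abs_sub _ _
      _ ≤ w m * M + (w m - w 0) * M := add_le_add h1' hterm
      _ ≤ 2 * w m * M := by nlinarith [hw_pos 0, hM_pos, hw_pos m]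
  -- Abel with b
  set b : ℕ → ℝ := fun k => a n k / w k with hb
  have hab : ∀ k, a n k = b k * w k := fun k => by
    rw [hb]; field_simp [(hw_pos k).ne']
  have key : ∑ k ∈ Finset.range (n+1), a n k * Real.sin (((k:ℝ) + 1/2) * t)
      = b n * G (n+1) - ∑ i ∈ Finset.range n, (b (i+1) - b i) * G (i+1) := by
    have habel := Finset.sum_range_by_parts (M := ℝ) b
      (fun l => w l * Real.sin (((l:ℝ) + 1/2) * t)) (n+1)
    simp only [smul_eq_mul, Nat.add_sub_cancel] at habel
    rw [← habel]
    refine Finset.sum_congr rfl fun k _ => ?_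
    rw [hab k]; ring
  have main : |∑ k ∈ Finset.range (n+1), a n k * Real.sin (((k:ℝ) + 1/2) * t)|
      ≤ 2 * M * (1 + C) * a n n := by
    rw [key]
    have hbn : b n * w n = a n n := (hab n).symm
    have hbnn : 0 ≤ b n := div_nonneg (hnn n n) (hw_pos n).le
    have hsum : |∑ i ∈ Finset.range n, (b (i+1) - b i) * G (i+1)|
        ≤ 2 * M * (C * a n n) := by
      calc |∑ i ∈ Finset.range n, (b (i+1) - b i) * G (i+1)|
          ≤ ∑ i ∈ Finset.range n, |(b (i+1) - b i)| * |G (i+1)| := by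
            refine (Finset.abs_sum_le_sum_abs _ _).trans ?_
            refine le_of_eq (Finset.sum_congr rfl fun i _ => abs_mul _ _)
        _ ≤ ∑ i ∈ Finset.range n, |(b (i+1) - b i)| * (2 * w i * M) := by
            refine Finset.sum_le_sum fun i _ => ?_
            exact mul_le_mul_of_nonneg_left (hG_bound i) (abs_nonneg _)
        _ = 2 * M * ∑ i ∈ Finset.range n, w i * |b i - b (i+1)| := by
            rw [Finset.mul_sum]
            refine Finset.sum_congr rfl fun i _ => ?_
            rw [abs_sub_comm]
            ring
        _ ≤ 2 * M * (C * a n n) := by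
            apply mul_le_mul_of_nonneg_left _ (by positivity)
            refine le_trans (le_of_eq ?_) hAn
            refine Finset.sum_congr rfl fun i _ => ?_
            show w i * |a n i / w i - a n (i+1) / w (i+1)| = _
            have hcast : w (i+1) = ((i:ℝ) + 2)^β := by
              simp only [hw]
              push_cast
              ring_nf
            rw [hcast]
    calc |b n * G (n+1) - ∑ i ∈ Finset.range n, (b (i+1) - b i) * G (i+1)|
        ≤ |b n * G (n+1)| + |∑ i ∈ Finset.range n, (b (i+1) - b i) * G (i+1)| := abs_sub _ _
      _ ≤ b n * (2 * w n * M) + 2 * M * (C * a n n) := by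
          refine add_le_add ?_ hsum
          rw [abs_mul, abs_of_nonneg hbnn]
          exact mul_le_mul_of_nonneg_left (hG_bound n) hbnn
      _ = 2 * M * (a n n) + 2 * M * (C * a n n) := by rw [← hbn]; ring
      _ = 2 * M * (1 + C) * a n n := by ring
  -- conclude
  have hKsin : 2 * Real.sin (t/2) * (∑ k ∈ Finset.range (n+1), a n k * dirK k t)
      = ∑ k ∈ Finset.range (n+1), a n k * Real.sin (((k:ℝ) + 1/2) * t) := by
    rw [Finset.mul_sum]
    refine Finset.sum_congr rfl fun k _ => ?_
    rw [← two_sin_dirK k t]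
    ring
  have habs : |∑ k ∈ Finset.range (n+1), a n k * dirK k t|
      ≤ (1 + C) * a n n / (Real.sin (t/2))^2 := by
    have h2s : (0:ℝ) < 2 * Real.sin (t/2) := by linarith
    have := main
    rw [← hKsin] at this
    rw [abs_mul, abs_of_pos h2s] at this
    have hdiv : |∑ k ∈ Finset.range (n+1), a n k * dirK k t|
        ≤ 2 * M * (1 + C) * a n n / (2 * Real.sin (t/2)) := by
      rw [le_div_iff₀ h2s]
      linarith [this]
    refine hdiv.trans (le_of_eq ?_)
    rw [hM]
    field_simp
  -- Jordan
  have hjordan : t / Real.pi ≤ Real.sin (t/2) := by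
    have := Real.mul_le_sin (x := t/2) (by linarith) (by linarith)
    calc t / Real.pi = 2 / Real.pi * (t/2) := by ring
      _ ≤ Real.sin (t/2) := this
  have hsq : t^2 / Real.pi^2 ≤ (Real.sin (t/2))^2 := by
    have h0 : 0 ≤ t / Real.pi := by positivity
    calc t^2 / Real.pi^2 = (t/Real.pi)^2 := by ring
      _ ≤ (Real.sin (t/2))^2 := by nlinarith
  refine habs.trans ?_
  have hCnn : 0 ≤ (1 + C) * a n n := by nlinarith [hnn n n]
  have hpos : (0:ℝ) < t^2 / Real.pi^2 := by positivity
  calc (1 + C) * a n n / (Real.sin (t/2))^2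
      ≤ (1 + C) * a n n / (t^2 / Real.pi^2) := by
        exact div_le_div_of_nonneg_left hCnn hpos hsq
    _ = (1 + C) * a n n * Real.pi^2 / t^2 := by
        field_simp

theorem matrix_mean_approx_HBV_mixed
    (f : ℝ → ℝ) (hf : Continuous f) (hper : Function.Periodic f (2 * Real.pi))
    (β : ℝ) (hβ : 0 ≤ β)
    (a : ℕ → ℕ → ℝ) (htri : ∀ n k : ℕ, n < k → a n k = 0)
    (hnn : ∀ n k : ℕ, 0 ≤ a n k)
    (hrow : ∀ n : ℕ, ∑ k ∈ Finset.range (n + 1), a n k = 1)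
    (C : ℝ) (hC : 0 < C)
    (hA : ∀ n m : ℕ, m ≤ n →
      ∑ k ∈ Finset.range m,
        ((k : ℝ) + 1) ^ β * |a n k / ((k : ℝ) + 1) ^ β - a n (k + 1) / ((k : ℝ) + 2) ^ β|
        ≤ C * a n m)
    (H : ℝ → ℝ) (hHnn : ∀ u : ℝ, 0 < u → u ≤ Real.pi → 0 ≤ H u)
    (C₁ : ℝ) (hC₁ : 0 < C₁)
    (hint₁ : ∀ u : ℝ, 0 < u → u ≤ Real.pi →
      ∫ t in u..Real.pi, modulusOfContinuity f t / t ^ 2 ≤ C₁ * H u)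
    :
    ∃ C' : ℝ, 0 < C' ∧ ∀ (n : ℕ) (x : ℝ),
      |matrixTransform a f n x - f x| ≤ C' * (modulusOfContinuity f (Real.pi / (n + 1)) + a n n * H (Real.pi / (n + 1))) := by
  have hπ := Real.pi_pos
  refine ⟨2 + 2 * (1 + C) * Real.pi * C₁, by positivity, fun n x => ?_⟩
  set u : ℝ := Real.pi / (n + 1) with hu
  have hn1 : (0:ℝ) < (n:ℝ) + 1 := by positivity
  have hu_pos : 0 < u := by positivity
  have hu_le : u ≤ Real.pi := by
    rw [hu, div_le_iff₀ hn1]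
    nlinarith [Nat.cast_nonneg (α := ℝ) n]
  set ω := modulusOfContinuity f with hω
  set K : ℝ → ℝ := fun t => ∑ k ∈ Finset.range (n+1), a n k * dirK k t with hK
  set φ : ℝ → ℝ := fun t => f (x + t) + f (x - t) - 2 * f x with hφ
  have hφc : Continuous φ :=
    ((hf.comp (continuous_const.add continuous_id)).add
      (hf.comp (continuous_const.sub continuous_id))).sub continuous_const
  have hKc : Continuous K := continuous_finset_sum _ fun k _ => continuous_const.mul (dirK_continuous k)
  have hφK : Continuous fun t => φ t * K t := hφc.mul hKc
  -- representation
  have hrepr : matrixTransform a f n x - f x = (1/Real.pi) * ∫ t in (0:ℝ)..Real.pi, φ t * K t := by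
    have h1 : matrixTransform a f n x - f x
        = ∑ k ∈ Finset.range (n+1), a n k * (fourierPartialSum f k x - f x) := by
      unfold matrixTransform
      have e : ∑ k ∈ Finset.range (n+1), a n k * (fourierPartialSum f k x - f x)
          = (∑ k ∈ Finset.range (n+1), a n k * fourierPartialSum f k x)
            - (∑ k ∈ Finset.range (n+1), a n k) * f x := by
        rw [Finset.sum_mul, ← Finset.sum_sub_distrib]
        exact Finset.sum_congr rfl fun k _ => by ring
      rw [e, hrow n, one_mul]
    rw [h1]
    have h2 : ∀ k ∈ Finset.range (n+1), a n k * (fourierPartialSum f k x - f x)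
        = (1/Real.pi) * ∫ t in (0:ℝ)..Real.pi, φ t * (a n k * dirK k t) := by
      intro k _
      rw [S_sub f hf hper k x]
      rw [show (fun t => φ t * (a n k * dirK k t)) = fun t => a n k * (φ t * dirK k t) by
        funext t; ring]
      rw [intervalIntegral.integral_const_mul]
      ring
    rw [Finset.sum_congr rfl h2, ← Finset.mul_sum]
    congr 1
    rw [← intervalIntegral.integral_finset_sum (fun k _ =>
      (show Continuous fun t => φ t * (a n k * dirK k t) from hφc.mul (continuous_const.mul (dirK_continuous k))).intervalIntegrable _ _)]
    refine intervalIntegral.integral_congr fun t _ => ?_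
    rw [hK, hφ]
    simp only []
    rw [Finset.mul_sum]
  -- pointwise bound on φ
  have hφ_bound : ∀ t : ℝ, 0 < t → |φ t| ≤ 2 * ω t := by
    intro t ht
    have e1 : |f (x + t) - f x| ≤ ω t := moc_spec hf hper x t (by rw [abs_of_pos ht])
    have e2 : |f (x - t) - f x| ≤ ω t := by
      have := moc_spec hf hper x (-t) (by rw [abs_neg, abs_of_pos ht])
      rw [show x + -t = x - t by ring] at this
      exact this
    calc |φ t| = |(f (x + t) - f x) + (f (x - t) - f x)| := by rw [hφ]; ring_nf
      _ ≤ |f (x + t) - f x| + |f (x - t) - f x| := abs_add_le _ _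
      _ ≤ 2 * ω t := by linarith
  -- split the integral
  have hsplit : (∫ t in (0:ℝ)..Real.pi, φ t * K t)
      = (∫ t in (0:ℝ)..u, φ t * K t) + ∫ t in u..Real.pi, φ t * K t :=
    (intervalIntegral.integral_add_adjacent_intervals (hφK.intervalIntegrable _ _)
      (hφK.intervalIntegrable _ _)).symm
  -- near bound
  have hωu_nn : 0 ≤ ω u := moc_nonneg hf hper hu_pos.le
  have hnear : |∫ t in (0:ℝ)..u, φ t * K t| ≤ 2 * ω u * Real.pi := by
    have hb : ∀ t ∈ Set.uIoc (0:ℝ) u, ‖φ t * K t‖ ≤ 2 * ω u * ((n:ℝ) + 1) := by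
      intro t ht
      rw [Set.uIoc_of_le hu_pos.le] at ht
      have ht0 : 0 < t := ht.1
      have hKb : |K t| ≤ (n:ℝ) + 1 := by
        calc |K t| ≤ ∑ k ∈ Finset.range (n+1), |a n k * dirK k t| := Finset.abs_sum_le_sum_abs _ _
          _ ≤ ∑ k ∈ Finset.range (n+1), a n k * ((n:ℝ) + 1) := by
              refine Finset.sum_le_sum fun k hk => ?_
              rw [abs_mul, abs_of_nonneg (hnn n k)]
              refine mul_le_mul_of_nonneg_left ((dirK_abs_le k t).trans ?_) (hnn n k)
              have : (k:ℝ) ≤ (n:ℝ) := Nat.cast_le.mpr (by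
                have := Finset.mem_range.mp hk; omega)
              linarith
          _ = (n:ℝ) + 1 := by rw [← Finset.sum_mul, hrow n, one_mul]
      have hφb : |φ t| ≤ 2 * ω u := by
        refine (hφ_bound t ht0).trans ?_
        have := moc_mono hf hper ht.2
        linarith
      rw [Real.norm_eq_abs, abs_mul]
      calc |φ t| * |K t| ≤ (2 * ω u) * ((n:ℝ) + 1) :=
        mul_le_mul hφb hKb (abs_nonneg _) (by positivity)
        _ = 2 * ω u * ((n:ℝ) + 1) := by ring
    have := intervalIntegral.norm_integral_le_of_norm_le_const hb
    rw [Real.norm_eq_abs] at this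
    refine this.trans ?_
    rw [show |u - 0| = u by rw [abs_of_pos (by simpa using hu_pos)]; ring_nf]
    rw [hu]
    rw [show 2 * ω (Real.pi / (↑n + 1)) * ((n:ℝ) + 1) * (Real.pi / (↑n + 1))
        = 2 * ω (Real.pi / (↑n + 1)) * Real.pi * (((n:ℝ) + 1) / ((n:ℝ) + 1)) by ring]
    rw [div_self (ne_of_gt hn1), mul_one]
  -- far bound
  have haCnn : (0:ℝ) ≤ 2 * (1 + C) * a n n * Real.pi ^ 2 := by
    have := hnn n n; positivity
  have hfar : |∫ t in u..Real.pi, φ t * K t|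
      ≤ 2 * (1 + C) * a n n * Real.pi ^ 2 * (C₁ * H u) := by
    have hint_abs : IntervalIntegrable (fun t => |φ t * K t|) volume u Real.pi :=
      (hφK.abs).intervalIntegrable _ _
    have hmoc_int : IntervalIntegrable (fun t => ω t / t ^ 2) volume u Real.pi := by
      rw [intervalIntegrable_iff, Set.uIoc_of_le hu_le]
      apply MeasureTheory.Integrable.mono' (g := fun _ => ω Real.pi / u ^ 2)
        (MeasureTheory.integrableOn_const measure_Ioc_lt_top.ne)
      · exact ((moc_measurable hf hper).div ((measurable_id.pow_const 2))).aestronglyMeasurable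
      · filter_upwards [MeasureTheory.ae_restrict_mem measurableSet_Ioc] with t ht
        have ht0 : 0 < t := lt_trans hu_pos ht.1
        have hωt_nn : 0 ≤ ω t := moc_nonneg hf hper ht0.le
        rw [Real.norm_eq_abs, abs_of_nonneg (by positivity)]
        apply div_le_div₀ (moc_nonneg hf hper hπ.le)
          (moc_mono hf hper ht.2) (by positivity)
        nlinarith [ht.1, hu_pos]
    have hmono : (∫ t in u..Real.pi, |φ t * K t|)
        ≤ ∫ t in u..Real.pi, (2 * (1 + C) * a n n * Real.pi ^ 2) * (ω t / t ^ 2) := by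
      apply intervalIntegral.integral_mono_on hu_le hint_abs (hmoc_int.const_mul _)
      intro t ht
      have ht0 : 0 < t := lt_of_lt_of_le hu_pos ht.1
      have hKb := kernel_bound β C hβ hC.le a hnn n (hA n n le_rfl) t ht0 ht.2
      have hφb := hφ_bound t ht0
      have hωt_nn : 0 ≤ ω t := moc_nonneg hf hper ht0.le
      rw [abs_mul]
      calc |φ t| * |K t| ≤ (2 * ω t) * ((1 + C) * a n n * Real.pi ^ 2 / t ^ 2) := by
            apply mul_le_mul hφb hKb (abs_nonneg _) (by positivity)
        _ = (2 * (1 + C) * a n n * Real.pi ^ 2) * (ω t / t ^ 2) := by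
            field_simp
    calc |∫ t in u..Real.pi, φ t * K t|
        ≤ ∫ t in u..Real.pi, |φ t * K t| :=
          intervalIntegral.abs_integral_le_integral_abs hu_le
      _ ≤ ∫ t in u..Real.pi, (2 * (1 + C) * a n n * Real.pi ^ 2) * (ω t / t ^ 2) := hmono
      _ = (2 * (1 + C) * a n n * Real.pi ^ 2) * ∫ t in u..Real.pi, ω t / t ^ 2 :=
          intervalIntegral.integral_const_mul _ _
      _ ≤ 2 * (1 + C) * a n n * Real.pi ^ 2 * (C₁ * H u) := by
          apply mul_le_mul_of_nonneg_left _ haCnn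
          exact hint₁ u hu_pos hu_le
  -- combine
  rw [hrepr]
  have hH_nn : 0 ≤ H u := hHnn u hu_pos hu_le
  have htot : |(1/Real.pi) * ∫ t in (0:ℝ)..Real.pi, φ t * K t|
      ≤ (1/Real.pi) * (2 * ω u * Real.pi + 2 * (1 + C) * a n n * Real.pi ^ 2 * (C₁ * H u)) := by
    rw [abs_mul, abs_of_pos (by positivity : (0:ℝ) < 1/Real.pi)]
    apply mul_le_mul_of_nonneg_left _ (by positivity : (0:ℝ) ≤ 1/Real.pi)
    rw [hsplit]
    calc |(∫ t in (0:ℝ)..u, φ t * K t) + ∫ t in u..Real.pi, φ t * K t|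
        ≤ |∫ t in (0:ℝ)..u, φ t * K t| + |∫ t in u..Real.pi, φ t * K t| := abs_add_le _ _
      _ ≤ 2 * ω u * Real.pi + 2 * (1 + C) * a n n * Real.pi ^ 2 * (C₁ * H u) :=
          add_le_add hnear hfar
  refine htot.trans ?_
  have hann := hnn n n
  have expand : (1/Real.pi) * (2 * ω u * Real.pi + 2 * (1 + C) * a n n * Real.pi ^ 2 * (C₁ * H u))
      = 2 * ω u + (2 * (1 + C) * Real.pi * C₁) * (a n n * H u) := by
    field_simp
  rw [expand]
  have h2C : (0:ℝ) ≤ 2 * (1 + C) * Real.pi * C₁ := by positivity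
  nlinarith [mul_nonneg hann hH_nn, hωu_nn, mul_nonneg h2C hωu_nn,
    mul_nonneg (mul_nonneg h2C hann) hH_nn]
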